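/- Let Q_u^{(n)} and Q_l^{(n)} be the fixed points of the optimistic and pessimistic Bellman operators with confidence radii ε_R(n) → 0 and ε_p(n) → 0 as n → ∞, and with estimated models (R̂_n, P̂_n) converging to (R, P) in sup and L1 norms respectively. Then both Q_u^{(n)} and Q_l^{(n)} converge in sup norm to Q*, the optimal Q-value function of the MDP (S, A, P, R, γ) with γ ∈ [0,1); in particular the confidence interval lengths Q_u^{(n)}(s,a) − Q_l^{(n)}(s,a) converge to 0 for every (s,a). -/

import Mathlib

open Filter

lemma aux_sSup_bound {s : Set ℝ} {y c : ℝ} (hne : s.Nonempty)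
    (h : ∀ x ∈ s, |x - y| ≤ c) : |sSup s - y| ≤ c := by
  obtain ⟨x0, hx0⟩ := hne
  have hbdd : BddAbove s := ⟨y + c, fun x hx => by linarith [(abs_le.1 (h x hx)).2]⟩
  rw [abs_le]
  refine ⟨?_, ?_⟩
  · have h1 := (abs_le.1 (h x0 hx0)).1
    have h2 := le_csSup hbdd hx0
    linarith
  · have h2 := csSup_le ⟨x0, hx0⟩ (fun x hx => show x ≤ y + c by linarith [(abs_le.1 (h x hx)).2])
    linarith

lemma aux_sInf_bound {s : Set ℝ} {y c : ℝ} (hne : s.Nonempty)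
    (h : ∀ x ∈ s, |x - y| ≤ c) : |sInf s - y| ≤ c := by
  obtain ⟨x0, hx0⟩ := hne
  have hbdd : BddBelow s := ⟨y - c, fun x hx => by linarith [(abs_le.1 (h x hx)).1]⟩
  rw [abs_le]
  refine ⟨?_, ?_⟩
  · have h2 := le_csInf ⟨x0, hx0⟩ (fun x hx => show y - c ≤ x by linarith [(abs_le.1 (h x hx)).1])
    linarith
  · have h1 := (abs_le.1 (h x0 hx0)).2
    have h2 := csInf_le hbdd hx0
    linarith
lemma aux_sup'_diff {ι : Type*} (t : Finset ι) (ht : t.Nonempty) (f g : ι → ℝ) (c : ℝ)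
    (h : ∀ i ∈ t, |f i - g i| ≤ c) : |t.sup' ht f - t.sup' ht g| ≤ c := by
  rw [abs_le]
  constructor
  · have : t.sup' ht g ≤ t.sup' ht f + c := by
      apply Finset.sup'_le
      intro i hi
      have := (abs_le.1 (h i hi)).1
      have := Finset.le_sup' f hi
      linarith
    linarith
  · have : t.sup' ht f ≤ t.sup' ht g + c := by
      apply Finset.sup'_le
      intro i hi
      have := (abs_le.1 (h i hi)).2
      have := Finset.le_sup' g hi
      linarith
    linarith

lemma aux_abs_sup' {ι : Type*} (t : Finset ι) (ht : t.Nonempty) (f : ι → ℝ) (c : ℝ)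
    (h : ∀ i ∈ t, |f i| ≤ c) : |t.sup' ht f| ≤ c := by
  have := aux_sup'_diff t ht f (fun _ => 0) c (by simpa using h)
  simpa using this

lemma aux_key {S A : Type*} [Fintype S] [Fintype A] [Nonempty S] [Nonempty A]
    {γ : ℝ} (hγ0 : 0 ≤ γ) (hγ1 : γ < 1)
    (R R' : S → A → ℝ) (P P' : S → A → S → ℝ)
    (hP'0 : ∀ s a s', 0 ≤ P' s a s') (hP'1 : ∀ s a, ∑ s', P' s a s' = 1)
    (σ εR εp : ℝ) (hσ : |σ| ≤ εR) (hεp : 0 ≤ εp)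
    (ext : Set ℝ → ℝ)
    (hext : ∀ (s : Set ℝ) (y c : ℝ), s.Nonempty → (∀ x ∈ s, |x - y| ≤ c) → |ext s - y| ≤ c)
    (Q Qstar : S × A → ℝ)
    (hQ : ∀ sa : S × A, Q sa = (R' sa.1 sa.2 + σ) +
      ext {x : ℝ | ∃ Pt : S → ℝ, (∀ s', 0 ≤ Pt s') ∧ (∑ s', Pt s') = 1 ∧
        (∑ s', |Pt s' - P' sa.1 sa.2 s'|) ≤ εp ∧
        x = γ * ∑ s', Pt s' *
          (Finset.univ.sup' Finset.univ_nonempty (fun a' => Q (s', a')))})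
    (hQstar : ∀ sa : S × A, Qstar sa = R sa.1 sa.2 + γ * ∑ s', P sa.1 sa.2 s' *
      (Finset.univ.sup' Finset.univ_nonempty (fun a' => Qstar (s', a')))) :
    (1 - γ) * ‖Q - Qstar‖ ≤
      (∑ sa : S × A, |R' sa.1 sa.2 - R sa.1 sa.2|) + εR +
        γ * (εp + ∑ sa : S × A, ∑ s', |P' sa.1 sa.2 s' - P sa.1 sa.2 s'|) * ‖Qstar‖ := by
  set D := ‖Q - Qstar‖ with hD
  set K := ‖Qstar‖ with hK
  have hD0 : 0 ≤ D := norm_nonneg _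
  have hK0 : 0 ≤ K := norm_nonneg _
  have hεR0 : 0 ≤ εR := le_trans (abs_nonneg σ) hσ
  -- pointwise bound on |Q sa - Qstar sa|
  have hpw : ∀ sa : S × A, |Q sa - Qstar sa| ≤
      |R' sa.1 sa.2 - R sa.1 sa.2| + εR +
        γ * (εp + ∑ s', |P' sa.1 sa.2 s' - P sa.1 sa.2 s'|) * K + γ * D := by
    intro sa
    set Vq : S → ℝ := fun s' => Finset.univ.sup' Finset.univ_nonempty (fun a' => Q (s', a'))
    set Vs : S → ℝ := fun s' => Finset.univ.sup' Finset.univ_nonempty (fun a' => Qstar (s', a'))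
    have hVd : ∀ s', |Vq s' - Vs s'| ≤ D := by
      intro s'
      apply aux_sup'_diff
      intro a' _
      have := norm_le_pi_norm (Q - Qstar) (s', a')
      simpa [hD, Real.norm_eq_abs] using this
    have hVs : ∀ s', |Vs s'| ≤ K := by
      intro s'
      apply aux_abs_sup'
      intro a' _
      have := norm_le_pi_norm Qstar (s', a')
      simpa [hK, Real.norm_eq_abs] using this
    set δ := ∑ s', |P' sa.1 sa.2 s' - P sa.1 sa.2 s'| with hδ
    have hδ0 : 0 ≤ δ := Finset.sum_nonneg (fun _ _ => abs_nonneg _)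
    set y := γ * ∑ s', P sa.1 sa.2 s' * Vs s' with hy
    have hextb : |ext {x : ℝ | ∃ Pt : S → ℝ, (∀ s', 0 ≤ Pt s') ∧ (∑ s', Pt s') = 1 ∧
        (∑ s', |Pt s' - P' sa.1 sa.2 s'|) ≤ εp ∧
        x = γ * ∑ s', Pt s' * Vq s'} - y| ≤ γ * (D + (εp + δ) * K) := by
      apply hext
      · exact ⟨γ * ∑ s', P' sa.1 sa.2 s' * Vq s', P' sa.1 sa.2, hP'0 sa.1 sa.2,
          hP'1 sa.1 sa.2, by simp [hεp], rfl⟩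
      · rintro x ⟨Pt, hPt0, hPt1, hPtε, rfl⟩
        have key : |(∑ s', Pt s' * Vq s') - ∑ s', P sa.1 sa.2 s' * Vs s'| ≤ D + (εp + δ) * K := by
          have h1 : |∑ s', Pt s' * (Vq s' - Vs s')| ≤ D := by
            calc |∑ s', Pt s' * (Vq s' - Vs s')| ≤ ∑ s', |Pt s' * (Vq s' - Vs s')| :=
              Finset.abs_sum_le_sum_abs _ _
            _ ≤ ∑ s', Pt s' * D := by
                apply Finset.sum_le_sum
                intro s' _
                rw [abs_mul, abs_of_nonneg (hPt0 s')]
                exact mul_le_mul_of_nonneg_left (hVd s') (hPt0 s')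
            _ = D := by rw [← Finset.sum_mul, hPt1, one_mul]
          have h2 : |∑ s', (Pt s' - P sa.1 sa.2 s') * Vs s'| ≤ (εp + δ) * K := by
            calc |∑ s', (Pt s' - P sa.1 sa.2 s') * Vs s'|
                ≤ ∑ s', |(Pt s' - P sa.1 sa.2 s') * Vs s'| := Finset.abs_sum_le_sum_abs _ _
            _ ≤ ∑ s', |Pt s' - P sa.1 sa.2 s'| * K := by
                apply Finset.sum_le_sum
                intro s' _
                rw [abs_mul]
                exact mul_le_mul_of_nonneg_left (hVs s') (abs_nonneg _)
            _ = (∑ s', |Pt s' - P sa.1 sa.2 s'|) * K := by rw [Finset.sum_mul]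
            _ ≤ (εp + δ) * K := by
                apply mul_le_mul_of_nonneg_right _ hK0
                calc ∑ s', |Pt s' - P sa.1 sa.2 s'|
                    ≤ ∑ s', (|Pt s' - P' sa.1 sa.2 s'| + |P' sa.1 sa.2 s' - P sa.1 sa.2 s'|) := by
                      apply Finset.sum_le_sum
                      intro s' _
                      exact abs_sub_le _ _ _
                _ = (∑ s', |Pt s' - P' sa.1 sa.2 s'|) + δ := by rw [Finset.sum_add_distrib]
                _ ≤ εp + δ := by linarith
          calc |(∑ s', Pt s' * Vq s') - ∑ s', P sa.1 sa.2 s' * Vs s'|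
              = |(∑ s', Pt s' * (Vq s' - Vs s')) + ∑ s', (Pt s' - P sa.1 sa.2 s') * Vs s'| := by
                congr 1
                rw [← Finset.sum_add_distrib, ← Finset.sum_sub_distrib]
                exact Finset.sum_congr rfl fun s' _ => by ring
          _ ≤ |∑ s', Pt s' * (Vq s' - Vs s')| + |∑ s', (Pt s' - P sa.1 sa.2 s') * Vs s'| :=
              abs_add_le _ _
          _ ≤ D + (εp + δ) * K := add_le_add h1 h2
        calc |γ * ∑ s', Pt s' * Vq s' - y|
            = γ * |(∑ s', Pt s' * Vq s') - ∑ s', P sa.1 sa.2 s' * Vs s'| := by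
              rw [hy, ← mul_sub, abs_mul, abs_of_nonneg hγ0]
        _ ≤ γ * (D + (εp + δ) * K) := mul_le_mul_of_nonneg_left key hγ0
    have := hQ sa
    have h2 := hQstar sa
    have hsplit : Q sa - Qstar sa = (R' sa.1 sa.2 - R sa.1 sa.2) + σ +
        (ext {x : ℝ | ∃ Pt : S → ℝ, (∀ s', 0 ≤ Pt s') ∧ (∑ s', Pt s') = 1 ∧
          (∑ s', |Pt s' - P' sa.1 sa.2 s'|) ≤ εp ∧
          x = γ * ∑ s', Pt s' * Vq s'} - y) := by
      rw [this, h2, hy]; ring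
    calc |Q sa - Qstar sa| ≤ |R' sa.1 sa.2 - R sa.1 sa.2| + |σ| +
        |ext {x : ℝ | ∃ Pt : S → ℝ, (∀ s', 0 ≤ Pt s') ∧ (∑ s', Pt s') = 1 ∧
          (∑ s', |Pt s' - P' sa.1 sa.2 s'|) ≤ εp ∧
          x = γ * ∑ s', Pt s' * Vq s'} - y| := by
          rw [hsplit]
          exact le_trans (abs_add_le _ _) (add_le_add_left (abs_add_le _ _) _)
    _ ≤ |R' sa.1 sa.2 - R sa.1 sa.2| + εR + γ * (D + (εp + δ) * K) :=
        add_le_add (add_le_add_right hσ _) hextb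
    _ ≤ |R' sa.1 sa.2 - R sa.1 sa.2| + εR + γ * (εp + δ) * K + γ * D := by ring_nf; rfl
  -- global bound
  have hbig : D ≤ (∑ sa : S × A, |R' sa.1 sa.2 - R sa.1 sa.2|) + εR +
      γ * (εp + ∑ sa : S × A, ∑ s', |P' sa.1 sa.2 s' - P sa.1 sa.2 s'|) * K + γ * D := by
    rw [hD]
    apply pi_norm_le_iff_of_nonneg ?_ |>.2
    · intro sa
      rw [Pi.sub_apply, Real.norm_eq_abs]
      refine le_trans (hpw sa) ?_
      gcongr
      · exact Finset.single_le_sum (f := fun sa : S × A => |R' sa.1 sa.2 - R sa.1 sa.2|)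
          (fun _ _ => abs_nonneg _) (Finset.mem_univ sa)
      · exact Finset.single_le_sum
          (f := fun sa : S × A => ∑ s', |P' sa.1 sa.2 s' - P sa.1 sa.2 s'|)
          (fun _ _ => Finset.sum_nonneg fun _ _ => abs_nonneg _) (Finset.mem_univ sa)
    · have : 0 ≤ γ * (εp + ∑ sa : S × A, ∑ s', |P' sa.1 sa.2 s' - P sa.1 sa.2 s'|) * K := by
        apply mul_nonneg (mul_nonneg hγ0 _) hK0
        exact add_nonneg hεp (Finset.sum_nonneg fun _ _ =>
          Finset.sum_nonneg fun _ _ => abs_nonneg _)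
      have h0 : 0 ≤ ∑ sa : S × A, |R' sa.1 sa.2 - R sa.1 sa.2| :=
        Finset.sum_nonneg fun _ _ => abs_nonneg _
      nlinarith [mul_nonneg hγ0 hD0]
  linarith

/-- Shrinking confidence intervals (proof of Theorem 1): as the confidence radii tend to `0`
and the estimated model converges to the true model, the fixed points of the optimistic and
pessimistic Bellman operators converge in sup norm to the true optimal Q-values `Q*`; in
particular the confidence-interval lengths `Q_u - Q_l` converge to `0` pointwise. -/
theorem stmt_19 {S A : Type*} [Fintype S] [Fintype A] [Nonempty S] [Nonempty A]
    (γ : ℝ) (hγ : γ ∈ Set.Ico (0 : ℝ) 1)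
    (R : S → A → ℝ) (P : S → A → S → ℝ)
    (hP0 : ∀ s a s', 0 ≤ P s a s') (hP1 : ∀ s a, ∑ s', P s a s' = 1)
    (Rn : ℕ → S → A → ℝ) (Pn : ℕ → S → A → S → ℝ)
    (hPn0 : ∀ n s a s', 0 ≤ Pn n s a s') (hPn1 : ∀ n s a, ∑ s', Pn n s a s' = 1)
    (hRconv : ∀ s a, Tendsto (fun n => Rn n s a) atTop (nhds (R s a)))
    (hPconv : ∀ s a, Tendsto (fun n => ∑ s', |Pn n s a s' - P s a s'|) atTop (nhds 0))
    (εR εp : ℕ → ℝ) (hεR0 : ∀ n, 0 ≤ εR n) (hεp0 : ∀ n, 0 ≤ εp n)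
    (hεR : Tendsto εR atTop (nhds 0)) (hεp : Tendsto εp atTop (nhds 0))
    (Qu Ql : ℕ → S × A → ℝ)
    (hQu : ∀ n (sa : S × A), Qu n sa = (Rn n sa.1 sa.2 + εR n) +
      sSup {x : ℝ | ∃ Pt : S → ℝ, (∀ s', 0 ≤ Pt s') ∧ (∑ s', Pt s') = 1 ∧
        (∑ s', |Pt s' - Pn n sa.1 sa.2 s'|) ≤ εp n ∧
        x = γ * ∑ s', Pt s' *
          (Finset.univ.sup' Finset.univ_nonempty (fun a' => Qu n (s', a')))})
    (hQl : ∀ n (sa : S × A), Ql n sa = (Rn n sa.1 sa.2 - εR n) +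
      sInf {x : ℝ | ∃ Pt : S → ℝ, (∀ s', 0 ≤ Pt s') ∧ (∑ s', Pt s') = 1 ∧
        (∑ s', |Pt s' - Pn n sa.1 sa.2 s'|) ≤ εp n ∧
        x = γ * ∑ s', Pt s' *
          (Finset.univ.sup' Finset.univ_nonempty (fun a' => Ql n (s', a')))})
    (Qstar : S × A → ℝ)
    (hQstar : ∀ sa : S × A, Qstar sa = R sa.1 sa.2 + γ * ∑ s', P sa.1 sa.2 s' *
      (Finset.univ.sup' Finset.univ_nonempty (fun a' => Qstar (s', a')))) :
    Tendsto (fun n => ‖Qu n - Qstar‖) atTop (nhds 0)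
    ∧ Tendsto (fun n => ‖Ql n - Qstar‖) atTop (nhds 0)
    ∧ ∀ sa : S × A, Tendsto (fun n => Qu n sa - Ql n sa) atTop (nhds 0) := by

  obtain ⟨hγ0, hγ1⟩ := hγ
  have hγpos : (0:ℝ) < 1 - γ := by linarith
  set K := ‖Qstar‖ with hK
  set e : ℕ → ℝ := fun n => (∑ sa : S × A, |Rn n sa.1 sa.2 - R sa.1 sa.2|) + εR n +
      γ * (εp n + ∑ sa : S × A, ∑ s', |Pn n sa.1 sa.2 s' - P sa.1 sa.2 s'|) * K with he_def
  have hA : ∀ sa : S × A, Tendsto (fun n => |Rn n sa.1 sa.2 - R sa.1 sa.2|) atTop (nhds 0) := by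
    intro sa
    simpa using ((hRconv sa.1 sa.2).sub (tendsto_const_nhds (x := R sa.1 sa.2))).abs
  have hAs : Tendsto (fun n => ∑ sa : S × A, |Rn n sa.1 sa.2 - R sa.1 sa.2|) atTop (nhds 0) := by
    have := tendsto_finset_sum (Finset.univ : Finset (S × A)) (fun sa _ => hA sa)
    simpa using this
  have hBs : Tendsto (fun n => ∑ sa : S × A, ∑ s', |Pn n sa.1 sa.2 s' - P sa.1 sa.2 s'|)
      atTop (nhds 0) := by
    have := tendsto_finset_sum (Finset.univ : Finset (S × A)) (fun sa _ => hPconv sa.1 sa.2)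
    simpa using this
  have he : Tendsto e atTop (nhds 0) := by
    have := (hAs.add hεR).add (((hεp.add hBs).const_mul γ).mul_const K)
    simpa using this
  have hdiv : Tendsto (fun n => e n / (1 - γ)) atTop (nhds 0) := by
    simpa using he.div_const (1 - γ)
  have hu : ∀ n, ‖Qu n - Qstar‖ ≤ e n / (1 - γ) := by
    intro n
    rw [le_div_iff₀ hγpos, mul_comm]
    exact aux_key hγ0 hγ1 R (Rn n) P (Pn n) (hPn0 n) (hPn1 n) (εR n) (εR n) (εp n)
      (by rw [abs_of_nonneg (hεR0 n)]) (hεp0 n) sSup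
      (fun s y c hne h => aux_sSup_bound hne h) (Qu n) Qstar (hQu n) hQstar
  have hl : ∀ n, ‖Ql n - Qstar‖ ≤ e n / (1 - γ) := by
    intro n
    rw [le_div_iff₀ hγpos, mul_comm]
    have := aux_key hγ0 hγ1 R (Rn n) P (Pn n) (hPn0 n) (hPn1 n) (-(εR n)) (εR n) (εp n)
      (by rw [abs_neg, abs_of_nonneg (hεR0 n)]) (hεp0 n) sInf
      (fun s y c hne h => aux_sInf_bound hne h) (Ql n) Qstar
      (fun sa => by rw [hQl n sa]; ring_nf) hQstar
    exact this
  have hTu : Tendsto (fun n => ‖Qu n - Qstar‖) atTop (nhds 0) :=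
    squeeze_zero (fun n => norm_nonneg _) hu hdiv
  have hTl : Tendsto (fun n => ‖Ql n - Qstar‖) atTop (nhds 0) :=
    squeeze_zero (fun n => norm_nonneg _) hl hdiv
  refine ⟨hTu, hTl, ?_⟩
  intro sa
  have hpu : Tendsto (fun n => Qu n sa - Qstar sa) atTop (nhds 0) := by
    refine squeeze_zero_norm (fun n => ?_) hTu
    have := norm_le_pi_norm (Qu n - Qstar) sa
    simpa using this
  have hpl : Tendsto (fun n => Ql n sa - Qstar sa) atTop (nhds 0) := by
    refine squeeze_zero_norm (fun n => ?_) hTl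
    have := norm_le_pi_norm (Ql n - Qstar) sa
    simpa using this
  have := hpu.sub hpl
  simpa using this
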